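/- Let E and F be real Banach spaces with F a dual space, i.e., F = G' for some Banach space G, let E₀ be a closed subspace of E, and T : E₀ → F a bounded linear operator. Then T admits a Lipschitz extension f : E → F (i.e., f|_{E₀} = T) if and only if T admits a bounded linear extension R : E → F. -/

import Mathlib

open NormedSpace

section ListLemmas

variable {α β : Type*}

lemma list_sum_map_add (l : List α) (f g : α → ℝ) :
    (l.map fun a => f a + g a).sum = (l.map f).sum + (l.map g).sum := by
  induction l with
  | nil => simp
  | cons a t ih => simp [ih]; ring

lemma list_sum_map_mul (l : List α) (c : ℝ) (f : α → ℝ) :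
    (l.map fun a => c * f a).sum = c * (l.map f).sum := by
  induction l with
  | nil => simp
  | cons a t ih => simp [ih]; ring

lemma list_sum_comm (l1 : List α) (l2 : List β) (F : α → β → ℝ) :
    (l1.map fun a => (l2.map fun b => F a b).sum).sum
      = (l2.map fun b => (l1.map fun a => F a b).sum).sum := by
  induction l1 with
  | nil => simp
  | cons a t ih => simp [ih, list_sum_map_add]

lemma list_sum_map_flatMap (l1 : List α) (f : α → List β) (g : β → ℝ) :
    (((l1.flatMap f)).map g).sum = (l1.map fun a => ((f a).map g).sum).sum := by
  induction l1 with
  | nil => simp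
  | cons a t ih => simp [ih]

lemma list_length_flatMap_const {l1 : List α} {f : α → List β} {n : ℕ}
    (h : ∀ a, (f a).length = n) : (l1.flatMap f).length = l1.length * n := by
  induction l1 with
  | nil => simp
  | cons a t ih => simp [ih, h]; ring

end ListLemmas

section InvariantMean

variable {A : Type*} [AddCommGroup A]

/-- The submodule of bounded real-valued functions on `A`. -/
def bddFuns (A : Type*) [AddCommGroup A] : Submodule ℝ (A → ℝ) where
  carrier := {φ | ∃ C, ∀ y, |φ y| ≤ C}
  add_mem' := by
    rintro φ ψ ⟨C, hC⟩ ⟨D, hD⟩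
    exact ⟨C + D, fun y => (abs_add_le _ _).trans (add_le_add (hC y) (hD y))⟩
  zero_mem' := ⟨0, by simp⟩
  smul_mem' := by
    rintro c φ ⟨C, hC⟩
    exact ⟨|c| * C, fun y => by
      simpa [abs_mul] using mul_le_mul_of_nonneg_left (hC y) (abs_nonneg c)⟩

/-- Supremum over translates of the average of `φ` over the list `l`. -/
noncomputable def avgSup (l : List A) (φ : A → ℝ) : ℝ :=
  ⨆ y : A, (l.map fun a => φ (y + a)).sum / l.length

variable {φ ψ : A → ℝ} {C : ℝ} {l : List A}

lemma sum_transl_le (h : ∀ z, φ z ≤ C) (y : A) :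
    (l.map fun a => φ (y + a)).sum ≤ l.length * C := by
  have := List.sum_le_card_nsmul (l.map fun a => φ (y + a)) C (by
    simp only [List.mem_map]
    rintro x ⟨a, -, rfl⟩
    exact h _)
  simpa [nsmul_eq_mul] using this

lemma le_sum_transl (h : ∀ z, C ≤ φ z) (y : A) :
    l.length * C ≤ (l.map fun a => φ (y + a)).sum := by
  have := List.card_nsmul_le_sum (l.map fun a => φ (y + a)) C (by
    simp only [List.mem_map]
    rintro x ⟨a, -, rfl⟩
    exact h _)
  simpa [nsmul_eq_mul] using this

lemma avg_transl_le (hl : l ≠ []) (h : ∀ z, φ z ≤ C) (y : A) :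
    (l.map fun a => φ (y + a)).sum / l.length ≤ C := by
  have hlen : (0:ℝ) < l.length := by
    simpa using Nat.pos_of_ne_zero (fun h0 => hl (List.length_eq_zero_iff.mp h0))
  rw [div_le_iff₀ hlen]
  calc (l.map fun a => φ (y + a)).sum ≤ l.length * C := sum_transl_le h y
  _ = C * l.length := by ring

lemma bddAbove_avg (hl : l ≠ []) (h : ∀ z, φ z ≤ C) :
    BddAbove (Set.range fun y : A => (l.map fun a => φ (y + a)).sum / l.length) := by
  refine ⟨C, ?_⟩
  rintro r ⟨y, rfl⟩
  exact avg_transl_le hl h y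

lemma avgSup_le (hl : l ≠ []) (h : ∀ z, φ z ≤ C) : avgSup l φ ≤ C := by
  haveI : Nonempty A := ⟨0⟩
  exact ciSup_le (avg_transl_le hl h)

lemma le_avgSup {Cu : ℝ} (hl : l ≠ []) (hub : ∀ z, φ z ≤ Cu) (h : ∀ z, C ≤ φ z) :
    C ≤ avgSup l φ := by
  have hlen : (0:ℝ) < l.length := by
    simpa using Nat.pos_of_ne_zero (fun h0 => hl (List.length_eq_zero_iff.mp h0))
  have h1 : C ≤ (l.map fun a => φ ((0:A) + a)).sum / l.length := by
    rw [le_div_iff₀ hlen]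
    calc C * l.length = l.length * C := by ring
    _ ≤ _ := le_sum_transl h 0
  exact h1.trans (le_ciSup (bddAbove_avg hl hub) (0:A))

lemma avg_le_avgSup (hl : l ≠ []) (hub : ∀ z, φ z ≤ C) (y : A) :
    (l.map fun a => φ (y + a)).sum / l.length ≤ avgSup l φ :=
  le_ciSup (bddAbove_avg hl hub) y

/-- The sublinear functional used in the Hahn–Banach construction of an invariant mean. -/
noncomputable def meanP (φ : A → ℝ) : ℝ :=
  sInf {r | ∃ l : List A, l ≠ [] ∧ r = avgSup l φ}

lemma meanP_set_nonempty (φ : A → ℝ) :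
    {r | ∃ l : List A, l ≠ [] ∧ r = avgSup l φ}.Nonempty :=
  ⟨avgSup [0] φ, [0], by simp, rfl⟩

lemma meanP_set_bddBelow (hφ : φ ∈ bddFuns A) :
    BddBelow {r | ∃ l : List A, l ≠ [] ∧ r = avgSup l φ} := by
  obtain ⟨C, hC⟩ := hφ
  refine ⟨-C, ?_⟩
  rintro r ⟨l, hl, rfl⟩
  exact le_avgSup hl (fun z => (abs_le.mp (hC z)).2) (fun z => (abs_le.mp (hC z)).1)

lemma meanP_le_avgSup (hφ : φ ∈ bddFuns A) (hl : l ≠ []) : meanP φ ≤ avgSup l φ :=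
  csInf_le (meanP_set_bddBelow hφ) ⟨l, hl, rfl⟩

lemma le_meanP (hφ : φ ∈ bddFuns A) {c : ℝ} (h : ∀ l : List A, l ≠ [] → c ≤ avgSup l φ) :
    c ≤ meanP φ :=
  le_csInf (meanP_set_nonempty φ) (by rintro r ⟨l, hl, rfl⟩; exact h l hl)

lemma meanP_le_of_le (hφ : φ ∈ bddFuns A) (h : ∀ z, φ z ≤ C) : meanP φ ≤ C := by
  have h1 : meanP φ ≤ avgSup [(0:A)] φ := meanP_le_avgSup hφ (by simp)
  exact h1.trans (avgSup_le (by simp) h)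

lemma le_meanP_of_le (hφ : φ ∈ bddFuns A) (h : ∀ z, C ≤ φ z) : C ≤ meanP φ := by
  obtain ⟨D, hD⟩ := id hφ
  exact le_meanP hφ (fun l hl => le_avgSup hl (fun z => (abs_le.mp (hD z)).2) h)


lemma avgSup_add_le {l1 l2 : List A} (h1 : l1 ≠ []) (h2 : l2 ≠ [])
    (hφ : φ ∈ bddFuns A) (hψ : ψ ∈ bddFuns A) :
    avgSup (l1.flatMap fun a => l2.map fun b => a + b) (φ + ψ)
      ≤ avgSup l1 φ + avgSup l2 ψ := by
  obtain ⟨Cφ, hCφ⟩ := hφ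
  obtain ⟨Cψ, hCψ⟩ := hψ
  set L := l1.flatMap fun a => l2.map fun b => a + b with hL
  have hlen : L.length = l1.length * l2.length :=
    list_length_flatMap_const (fun a => by simp)
  have hn1 : (0:ℝ) < l1.length := by
    simpa using Nat.pos_of_ne_zero (fun h0 => h1 (List.length_eq_zero_iff.mp h0))
  have hn2 : (0:ℝ) < l2.length := by
    simpa using Nat.pos_of_ne_zero (fun h0 => h2 (List.length_eq_zero_iff.mp h0))
  have hLpos : (0:ℝ) < L.length := by
    rw [hlen]; push_cast; exact mul_pos hn1 hn2
  haveI : Nonempty A := ⟨0⟩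
  refine ciSup_le fun y => ?_
  rw [div_le_iff₀ hLpos]
  have key : (L.map fun c => (φ + ψ) (y + c)).sum
      = (l1.map fun a => (l2.map fun b => φ (y + (a + b))).sum).sum
        + (l1.map fun a => (l2.map fun b => ψ (y + (a + b))).sum).sum := by
    rw [hL, list_sum_map_flatMap, ← list_sum_map_add]
    refine congrArg List.sum (List.map_congr_left fun a _ => ?_)
    rw [List.map_map, ← list_sum_map_add]
    rfl
  rw [key]
  have boundφ : (l1.map fun a => (l2.map fun b => φ (y + (a + b))).sum).sum
      ≤ l2.length * (avgSup l1 φ * l1.length) := by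
    have swap : (l1.map fun a => (l2.map fun b => φ (y + (a + b))).sum).sum
        = (l2.map fun b => (l1.map fun a => φ ((y + b) + a)).sum).sum := by
      rw [list_sum_comm]
      refine congrArg List.sum (List.map_congr_left fun b _ => ?_)
      refine congrArg List.sum (List.map_congr_left fun a _ => ?_)
      congr 1
      abel
    rw [swap]
    have hsum : ∀ z : A, (l1.map fun a => φ (z + a)).sum ≤ avgSup l1 φ * l1.length := by
      intro z
      have := avg_le_avgSup h1 (fun z => (abs_le.mp (hCφ z)).2) z
      rwa [div_le_iff₀ hn1] at this
    have := List.sum_le_card_nsmul (l2.map fun b => (l1.map fun a => φ ((y + b) + a)).sum)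
      (avgSup l1 φ * l1.length) (by
        simp only [List.mem_map]
        rintro x ⟨b, -, rfl⟩
        exact hsum (y + b))
    simpa [nsmul_eq_mul] using this
  have boundψ : (l1.map fun a => (l2.map fun b => ψ (y + (a + b))).sum).sum
      ≤ l1.length * (avgSup l2 ψ * l2.length) := by
    have hsum : ∀ z : A, (l2.map fun b => ψ (z + b)).sum ≤ avgSup l2 ψ * l2.length := by
      intro z
      have := avg_le_avgSup h2 (fun z => (abs_le.mp (hCψ z)).2) z
      rwa [div_le_iff₀ hn2] at this
    have harr : (l1.map fun a => (l2.map fun b => ψ (y + (a + b))).sum).sum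
        = (l1.map fun a => (l2.map fun b => ψ ((y + a) + b)).sum).sum := by
      refine congrArg List.sum (List.map_congr_left fun a _ => ?_)
      refine congrArg List.sum (List.map_congr_left fun b _ => ?_)
      congr 1
      abel
    rw [harr]
    have := List.sum_le_card_nsmul (l1.map fun a => (l2.map fun b => ψ ((y + a) + b)).sum)
      (avgSup l2 ψ * l2.length) (by
        simp only [List.mem_map]
        rintro x ⟨a, -, rfl⟩
        exact hsum (y + a))
    simpa [nsmul_eq_mul] using this
  calc _ ≤ l2.length * (avgSup l1 φ * l1.length) + l1.length * (avgSup l2 ψ * l2.length) :=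
        add_le_add boundφ boundψ
  _ = (avgSup l1 φ + avgSup l2 ψ) * L.length := by rw [hlen]; push_cast; ring

lemma meanP_add_le (hφ : φ ∈ bddFuns A) (hψ : ψ ∈ bddFuns A) :
    meanP (φ + ψ) ≤ meanP φ + meanP ψ := by
  have haux : ∀ l1 : List A, l1 ≠ [] → meanP (φ + ψ) - avgSup l1 φ ≤ meanP ψ := by
    intro l1 h1
    refine le_meanP hψ (fun l2 h2 => ?_)
    have hadd := avgSup_add_le h1 h2 hφ hψ
    have hne : (l1.flatMap fun a => l2.map fun b => a + b) ≠ [] := by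
      rcases List.exists_mem_of_ne_nil l1 h1 with ⟨a, ha⟩
      rcases List.exists_mem_of_ne_nil l2 h2 with ⟨b, hb⟩
      intro h0
      have : a + b ∈ (l1.flatMap fun a => l2.map fun b => a + b) := by
        simp only [List.mem_flatMap, List.mem_map]
        exact ⟨a, ha, b, hb, rfl⟩
      simp [h0] at this
    have h3 := (meanP_le_avgSup (add_mem hφ hψ) hne).trans hadd
    linarith
  have h4 : ∀ l1 : List A, l1 ≠ [] → meanP (φ + ψ) - meanP ψ ≤ avgSup l1 φ := by
    intro l1 h1
    linarith [haux l1 h1]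
  have := le_meanP hφ (c := meanP (φ + ψ) - meanP ψ) h4
  linarith

lemma meanP_smul {c : ℝ} (hc : 0 < c) (hφ : φ ∈ bddFuns A) :
    meanP (c • φ) = c * meanP φ := by
  have havg : ∀ l : List A, avgSup l (c • φ) = c * avgSup l φ := by
    intro l
    unfold avgSup
    rw [Real.mul_iSup_of_nonneg hc.le]
    congr 1
    funext y
    rw [show (l.map fun a => (c • φ) (y + a)) = l.map fun a => c * φ (y + a) from rfl,
      list_sum_map_mul]
    ring
  have hcφ : c • φ ∈ bddFuns A := Submodule.smul_mem _ c hφ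
  have h1 : meanP (c • φ) ≤ c * meanP φ := by
    have hstep : ∀ l : List A, l ≠ [] → meanP (c • φ) / c ≤ avgSup l φ := by
      intro l hl
      rw [div_le_iff₀ hc]
      have := meanP_le_avgSup hcφ hl
      rw [havg l] at this
      linarith
    have := le_meanP hφ hstep
    rw [div_le_iff₀ hc] at this
    linarith
  have h2 : c * meanP φ ≤ meanP (c • φ) := by
    refine le_meanP hcφ (fun l hl => ?_)
    rw [havg l]
    exact mul_le_mul_of_nonneg_left (meanP_le_avgSup hφ hl) hc.le
  linarith

lemma meanP_nonpos_of_telescope {C : ℝ} (a : A)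
    (hψb : ψ ∈ bddFuns A)
    (h : ∀ (y : A) (n : ℕ), ((List.range n).map fun i => ψ (y + i • a)).sum ≤ C) :
    meanP ψ ≤ 0 := by
  have hC : 0 ≤ C := by simpa using h 0 0
  haveI : Nonempty A := ⟨0⟩
  have key : ∀ n : ℕ, 0 < n → meanP ψ ≤ C / n := by
    intro n hn
    set l : List A := (List.range n).map fun i => i • a with hl
    have hlne : l ≠ [] := by
      simp only [hl, ne_eq, List.map_eq_nil_iff, List.range_eq_nil]
      omega
    have hlen : l.length = n := by simp [hl]
    refine (meanP_le_avgSup hψb hlne).trans ?_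
    refine ciSup_le fun y => ?_
    rw [hlen, div_le_div_iff₀ (by positivity) (by positivity)]
    have hsum : (l.map fun c => ψ (y + c)).sum ≤ C := by
      rw [hl, List.map_map]
      exact h y n
    exact mul_le_mul_of_nonneg_right hsum (by positivity)
  by_contra hpos
  push_neg at hpos
  obtain ⟨n, hn⟩ := exists_nat_gt (C / meanP ψ)
  have h1 := key (n + 1) (Nat.succ_pos n)
  have h2 : C / ((n:ℝ) + 1) < meanP ψ := by
    rw [div_lt_iff₀ (by positivity)]
    have hgt : C / meanP ψ < (n:ℝ) + 1 := by linarith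
    rw [div_lt_iff₀ hpos] at hgt
    linarith
  push_cast at h1
  linarith

lemma list_sum_map_neg {α : Type*} (l : List α) (f : α → ℝ) :
    (l.map fun a => -f a).sum = -(l.map f).sum := by
  induction l with
  | nil => simp
  | cons a t ih => simp [ih]; ring

lemma telescope_sum (φ : A → ℝ) (a y : A) (n : ℕ) :
    ((List.range n).map fun i => φ (a + (y + i • a)) - φ (y + i • a)).sum
      = φ (y + n • a) - φ y := by
  induction n with
  | zero => simp
  | succ n ih =>
    rw [List.range_succ, List.map_append, List.sum_append, ih]
    have h1 : a + (y + n • a) = y + (n + 1) • a := by rw [succ_nsmul]; abel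
    simp only [List.map_cons, List.map_nil, List.sum_cons, List.sum_nil, h1]
    ring

lemma meanP_shift_sub_nonpos (hφ : φ ∈ bddFuns A) (a : A) :
    meanP (fun y => φ (a + y) - φ y) ≤ 0 := by
  obtain ⟨D, hD⟩ := hφ
  have hmem : (fun y => φ (a + y) - φ y) ∈ bddFuns A :=
    ⟨D + D, fun y => (abs_sub (φ (a+y)) (φ y)).trans (add_le_add (hD _) (hD _))⟩
  refine meanP_nonpos_of_telescope (C := D + D) a hmem (fun y n => ?_)
  have : ((List.range n).map fun i => φ (a + (y + i • a)) - φ (y + i • a)).sum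
      = φ (y + n • a) - φ y := telescope_sum φ a y n
  rw [this]
  have h1 := abs_le.mp (hD (y + n • a))
  have h2 := abs_le.mp (hD y)
  linarith

lemma meanP_sub_shift_nonpos (hφ : φ ∈ bddFuns A) (a : A) :
    meanP (fun y => φ y - φ (a + y)) ≤ 0 := by
  obtain ⟨D, hD⟩ := hφ
  have hmem : (fun y => φ y - φ (a + y)) ∈ bddFuns A :=
    ⟨D + D, fun y => (abs_sub (φ y) (φ (a+y))).trans (add_le_add (hD _) (hD _))⟩
  refine meanP_nonpos_of_telescope (C := D + D) a hmem (fun y n => ?_)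
  have hneg : ((List.range n).map fun i => φ (y + i • a) - φ (a + (y + i • a))).sum
      = -((List.range n).map fun i => φ (a + (y + i • a)) - φ (y + i • a)).sum := by
    rw [← list_sum_map_neg]
    refine congrArg List.sum (List.map_congr_left fun i _ => ?_)
    ring
  rw [hneg, telescope_sum φ a y n]
  have h1 := abs_le.mp (hD (y + n • a))
  have h2 := abs_le.mp (hD y)
  linarith

/-- Existence of a (left-)invariant mean on the bounded functions on an abelian group. -/
theorem exists_invariant_mean (A : Type*) [AddCommGroup A] :
    ∃ m : bddFuns A →ₗ[ℝ] ℝ,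
      (∀ (φ : bddFuns A) (C : ℝ), (∀ y, (φ : A → ℝ) y ≤ C) → m φ ≤ C) ∧
      (∀ (φ ψ : bddFuns A) (a : A), (∀ y, (ψ : A → ℝ) y = (φ : A → ℝ) (a + y)) →
        m ψ = m φ) := by
  obtain ⟨g, -, hg⟩ := exists_extension_of_le_sublinear
    (⟨⊥, 0⟩ : (bddFuns A) →ₗ.[ℝ] ℝ) (fun φ => meanP (φ : A → ℝ))
    (fun c hc φ => by
      show meanP ((c • φ : bddFuns A) : A → ℝ) = c * meanP (φ : A → ℝ)
      rw [show ((c • φ : bddFuns A) : A → ℝ) = c • (φ : A → ℝ) from rfl]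
      exact meanP_smul hc φ.2)
    (fun φ ψ => by
      show meanP ((φ + ψ : bddFuns A) : A → ℝ) ≤ meanP (φ : A → ℝ) + meanP (ψ : A → ℝ)
      rw [show ((φ + ψ : bddFuns A) : A → ℝ) = (φ : A → ℝ) + (ψ : A → ℝ) from rfl]
      exact meanP_add_le φ.2 ψ.2)
    (fun x => by
      have hx : (x : bddFuns A) = 0 := (Submodule.mem_bot ℝ).mp x.2
      show (0 : ↥(⊥ : Submodule ℝ (bddFuns A)) →ₗ[ℝ] ℝ) x ≤ meanP ((x : bddFuns A) : A → ℝ)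
      rw [hx]
      simp only [LinearMap.zero_apply]
      exact le_meanP_of_le (Submodule.zero_mem _) (fun z => le_refl 0))
  refine ⟨g, fun φ C h => (hg φ).trans (meanP_le_of_le φ.2 h), fun φ ψ a h => ?_⟩
  have h1 : g (ψ - φ) ≤ 0 := by
    refine (hg (ψ - φ)).trans ?_
    have : ((ψ - φ : bddFuns A) : A → ℝ) = fun y => (φ : A → ℝ) (a + y) - (φ : A → ℝ) y := by
      funext y
      simp [h y]
    rw [this]
    exact meanP_shift_sub_nonpos φ.2 a
  have h2 : g (φ - ψ) ≤ 0 := by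
    refine (hg (φ - ψ)).trans ?_
    have : ((φ - ψ : bddFuns A) : A → ℝ) = fun y => (φ : A → ℝ) y - (φ : A → ℝ) (a + y) := by
      funext y
      simp [h y]
    rw [this]
    exact meanP_sub_shift_nonpos φ.2 a
  rw [map_sub] at h1 h2
  linarith

lemma mean_abs_le {A : Type*} [AddCommGroup A] (m : bddFuns A →ₗ[ℝ] ℝ)
    (hub : ∀ (φ : bddFuns A) (C : ℝ), (∀ y, (φ : A → ℝ) y ≤ C) → m φ ≤ C)
    (φ : bddFuns A) (C : ℝ) (h : ∀ y, |(φ : A → ℝ) y| ≤ C) : |m φ| ≤ C := by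
  rw [abs_le]
  constructor
  · have h2 : m (-φ) ≤ C := hub (-φ) C (fun y => by
      have := abs_le.mp (h y)
      show -(φ : A → ℝ) y ≤ C
      linarith [this.1])
    rw [map_neg] at h2
    linarith
  · exact hub φ C (fun y => (abs_le.mp (h y)).2)

lemma mean_const {A : Type*} [AddCommGroup A] (m : bddFuns A →ₗ[ℝ] ℝ)
    (hub : ∀ (φ : bddFuns A) (C : ℝ), (∀ y, (φ : A → ℝ) y ≤ C) → m φ ≤ C)
    (φ : bddFuns A) (c : ℝ) (h : ∀ y, (φ : A → ℝ) y = c) : m φ = c := by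
  have h1 := hub φ c (fun y => le_of_eq (h y))
  have h2 : m (-φ) ≤ -c := hub (-φ) (-c) (fun y => by
    show -(φ : A → ℝ) y ≤ -c
    rw [h y])
  rw [map_neg] at h2
  linarith

end InvariantMean

set_option maxHeartbeats 2000000 in
/-- For operators into a dual space, a Lipschitz extension exists iff a bounded linear
extension exists. -/
theorem stmt1 {E G : Type*} [NormedAddCommGroup E] [NormedSpace ℝ E] [CompleteSpace E]
    [NormedAddCommGroup G] [NormedSpace ℝ G] [CompleteSpace G]
    (E₀ : Subspace ℝ E) (hE₀ : IsClosed (E₀ : Set E))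
    (T : E₀ →L[ℝ] StrongDual ℝ G) :
    (∃ (K : NNReal) (f : E → StrongDual ℝ G), LipschitzWith K f ∧ ∀ x : E₀, f x = T x) ↔
      (∃ R : E →L[ℝ] StrongDual ℝ G, ∀ x : E₀, R x = T x) := by
  constructor
  · rintro ⟨K, f, hK, hfT⟩
    obtain ⟨m₀, hub₀, hinv₀⟩ := exists_invariant_mean ↥E₀
    obtain ⟨m₁, hub₁, hinv₁⟩ := exists_invariant_mean E
    -- basic Lipschitz estimate
    have hfd : ∀ (x x' : E) (g : G), |(f x - f x') g| ≤ K * ‖x - x'‖ * ‖g‖ := by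
      intro x x' g
      have h2 := hK.dist_le_mul x x'
      rw [dist_eq_norm, dist_eq_norm] at h2
      calc |(f x - f x') g| = ‖(f x - f x') g‖ := (Real.norm_eq_abs _).symm
        _ ≤ ‖f x - f x'‖ * ‖g‖ := ContinuousLinearMap.le_opNorm _ g
        _ ≤ (K * ‖x - x'‖) * ‖g‖ := mul_le_mul_of_nonneg_right h2 (norm_nonneg g)
        _ = K * ‖x - x'‖ * ‖g‖ := rfl
    -- Step 1: average over E₀ to get an E₀-equivariant map
    set φf : E → G → (↥E₀ → ℝ) := fun x g y => (f (x + ↑y) - f ↑y) g with hφf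
    have memφ : ∀ (x : E) (g : G), φf x g ∈ bddFuns ↥E₀ := by
      intro x g
      refine ⟨K * ‖x‖ * ‖g‖, fun y => ?_⟩
      have := hfd (x + ↑y) ↑y g
      rwa [add_sub_cancel_right] at this
    set F1 : E → G → ℝ := fun x g => m₀ ⟨φf x g, memφ x g⟩ with hF1def
    have hF1addg : ∀ (x : E) (g g' : G), F1 x (g + g') = F1 x g + F1 x g' := by
      intro x g g'
      have : (⟨φf x (g + g'), memφ x (g + g')⟩ : bddFuns ↥E₀)
          = ⟨φf x g, memφ x g⟩ + ⟨φf x g', memφ x g'⟩ := by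
        apply Subtype.ext
        funext y
        show (f (x + ↑y) - f ↑y) (g + g')
          = (f (x + ↑y) - f ↑y) g + (f (x + ↑y) - f ↑y) g'
        exact map_add _ g g'
      rw [hF1def]
      simp only [this, map_add]
    have hF1smulg : ∀ (x : E) (c : ℝ) (g : G), F1 x (c • g) = c * F1 x g := by
      intro x c g
      have : (⟨φf x (c • g), memφ x (c • g)⟩ : bddFuns ↥E₀)
          = c • (⟨φf x g, memφ x g⟩ : bddFuns ↥E₀) := by
        apply Subtype.ext
        funext y
        show (f (x + ↑y) - f ↑y) (c • g) = c * (f (x + ↑y) - f ↑y) g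
        rw [map_smul]
        rfl
      rw [hF1def]
      simp only [this, map_smul, smul_eq_mul]
    have hF1diff : ∀ (x x' : E) (g : G), |F1 x g - F1 x' g| ≤ K * ‖x - x'‖ * ‖g‖ := by
      intro x x' g
      have heq : F1 x g - F1 x' g = m₀ (⟨φf x g, memφ x g⟩ - ⟨φf x' g, memφ x' g⟩) := by
        rw [map_sub]
      rw [heq]
      refine mean_abs_le m₀ hub₀ _ _ (fun y => ?_)
      have hcoe : ((⟨φf x g, memφ x g⟩ - ⟨φf x' g, memφ x' g⟩ : bddFuns ↥E₀) : ↥E₀ → ℝ) y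
          = (f (x + ↑y) - f (x' + ↑y)) g := by
        show (f (x + ↑y) - f ↑y) g - (f (x' + ↑y) - f ↑y) g = (f (x + ↑y) - f (x' + ↑y)) g
        simp only [ContinuousLinearMap.sub_apply]
        ring
      rw [hcoe]
      have := hfd (x + ↑y) (x' + ↑y) g
      rwa [add_sub_add_right_eq_sub] at this
    have hF1bound : ∀ (x : E) (g : G), |F1 x g| ≤ K * ‖x‖ * ‖g‖ := by
      intro x g
      refine mean_abs_le m₀ hub₀ _ _ (fun y => ?_)
      have := hfd (x + ↑y) ↑y g
      rwa [add_sub_cancel_right] at this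
    have hF1equiv : ∀ (x : E) (x₀ : E₀) (g : G), F1 (x + ↑x₀) g = F1 x g + T x₀ g := by
      intro x x₀ g
      have memshift : (fun y => φf x g (x₀ + y)) ∈ bddFuns ↥E₀ := by
        refine ⟨K * ‖x‖ * ‖g‖, fun y => ?_⟩
        have := hfd (x + ↑(x₀ + y)) ↑(x₀ + y) g
        rwa [add_sub_cancel_right] at this
      have memconst : (fun _ : ↥E₀ => T x₀ g) ∈ bddFuns ↥E₀ := ⟨|T x₀ g|, fun y => le_refl _⟩
      have hsplit : (⟨φf (x + ↑x₀) g, memφ (x + ↑x₀) g⟩ : bddFuns ↥E₀)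
          = ⟨fun y => φf x g (x₀ + y), memshift⟩ + ⟨fun _ => T x₀ g, memconst⟩ := by
        apply Subtype.ext
        funext y
        show (f (x + ↑x₀ + ↑y) - f ↑y) g = (f (x + ↑(x₀ + y)) - f ↑(x₀ + y)) g + T x₀ g
        have e1 : x + ↑x₀ + ↑y = x + ↑(x₀ + y) := by
          rw [Submodule.coe_add]; abel
        rw [ContinuousLinearMap.sub_apply, ContinuousLinearMap.sub_apply, hfT y,
          hfT (x₀ + y), e1, map_add T]
        rw [ContinuousLinearMap.add_apply]
        ring
      have hshift : m₀ ⟨fun y => φf x g (x₀ + y), memshift⟩ = m₀ ⟨φf x g, memφ x g⟩ :=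
        hinv₀ ⟨φf x g, memφ x g⟩ ⟨fun y => φf x g (x₀ + y), memshift⟩ x₀ (fun y => rfl)
      have hconst : m₀ ⟨fun _ => T x₀ g, memconst⟩ = T x₀ g :=
        mean_const m₀ hub₀ _ _ (fun y => rfl)
      rw [hF1def]
      simp only [hsplit, map_add, hshift, hconst]
    -- Step 2: average over E to get an additive map
    set ψf : E → G → (E → ℝ) := fun x g y => F1 (x + y) g - F1 y g with hψf
    have memψ : ∀ (x : E) (g : G), ψf x g ∈ bddFuns E := by
      intro x g
      refine ⟨K * ‖x‖ * ‖g‖, fun y => ?_⟩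
      have := hF1diff (x + y) y g
      rwa [add_sub_cancel_right] at this
    set R0 : E → G → ℝ := fun x g => m₁ ⟨ψf x g, memψ x g⟩ with hR0def
    have hR0addg : ∀ (x : E) (g g' : G), R0 x (g + g') = R0 x g + R0 x g' := by
      intro x g g'
      have : (⟨ψf x (g + g'), memψ x (g + g')⟩ : bddFuns E)
          = ⟨ψf x g, memψ x g⟩ + ⟨ψf x g', memψ x g'⟩ := by
        apply Subtype.ext
        funext y
        show F1 (x + y) (g + g') - F1 y (g + g')
          = (F1 (x + y) g - F1 y g) + (F1 (x + y) g' - F1 y g')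
        rw [hF1addg, hF1addg]
        ring
      rw [hR0def]
      simp only [this, map_add]
    have hR0smulg : ∀ (x : E) (c : ℝ) (g : G), R0 x (c • g) = c * R0 x g := by
      intro x c g
      have : (⟨ψf x (c • g), memψ x (c • g)⟩ : bddFuns E)
          = c • (⟨ψf x g, memψ x g⟩ : bddFuns E) := by
        apply Subtype.ext
        funext y
        show F1 (x + y) (c • g) - F1 y (c • g) = c * (F1 (x + y) g - F1 y g)
        rw [hF1smulg, hF1smulg]
        ring
      rw [hR0def]
      simp only [this, map_smul, smul_eq_mul]
    have hR0bound : ∀ (x : E) (g : G), |R0 x g| ≤ K * ‖x‖ * ‖g‖ := by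
      intro x g
      refine mean_abs_le m₁ hub₁ _ _ (fun y => ?_)
      have := hF1diff (x + y) y g
      rwa [add_sub_cancel_right] at this
    have hR0addx : ∀ (x x' : E) (g : G), R0 (x + x') g = R0 x g + R0 x' g := by
      intro x x' g
      have memshift : (fun y => ψf x g (x' + y)) ∈ bddFuns E := by
        refine ⟨K * ‖x‖ * ‖g‖, fun y => ?_⟩
        have := hF1diff (x + (x' + y)) (x' + y) g
        rwa [add_sub_cancel_right] at this
      have hsplit : (⟨ψf (x + x') g, memψ (x + x') g⟩ : bddFuns E)
          = ⟨fun y => ψf x g (x' + y), memshift⟩ + ⟨ψf x' g, memψ x' g⟩ := by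
        apply Subtype.ext
        funext y
        show F1 (x + x' + y) g - F1 y g
          = (F1 (x + (x' + y)) g - F1 (x' + y) g) + (F1 (x' + y) g - F1 y g)
        rw [add_assoc]
        ring
      have hshift : m₁ ⟨fun y => ψf x g (x' + y), memshift⟩ = m₁ ⟨ψf x g, memψ x g⟩ :=
        hinv₁ ⟨ψf x g, memψ x g⟩ ⟨fun y => ψf x g (x' + y), memshift⟩ x' (fun y => rfl)
      rw [hR0def]
      simp only [hsplit, map_add, hshift]
    have hR0ext : ∀ (x₀ : E₀) (g : G), R0 ↑x₀ g = T x₀ g := by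
      intro x₀ g
      refine mean_const m₁ hub₁ _ _ (fun y => ?_)
      show F1 (↑x₀ + y) g - F1 y g = T x₀ g
      rw [add_comm, hF1equiv y x₀ g]
      ring
    -- assemble the continuous linear extension
    set Rdual : E → StrongDual ℝ G := fun x =>
      LinearMap.mkContinuous
        { toFun := fun g => R0 x g
          map_add' := hR0addg x
          map_smul' := fun c g => hR0smulg x c g }
        (K * ‖x‖)
        (fun g => by
          rw [Real.norm_eq_abs]
          calc |R0 x g| ≤ K * ‖x‖ * ‖g‖ := hR0bound x g
            _ = (K * ‖x‖) * ‖g‖ := by ring) with hRdual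
    have hRdual_apply : ∀ (x : E) (g : G), Rdual x g = R0 x g := fun _ _ => rfl
    set Radd : E →+ StrongDual ℝ G := AddMonoidHom.mk' Rdual (fun x x' => by
      ext g
      show Rdual (x + x') g = Rdual x g + Rdual x' g
      rw [hRdual_apply, hRdual_apply, hRdual_apply]
      exact hR0addx x x' g) with hRadd
    have hRadd_apply : ∀ (x : E) (g : G), Radd x g = R0 x g := fun _ _ => rfl
    have hnorm : ∀ x : E, ‖Radd x‖ ≤ K * ‖x‖ := by
      intro x
      refine ContinuousLinearMap.opNorm_le_bound _ (by positivity) (fun g => ?_)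
      rw [Real.norm_eq_abs, hRadd_apply]
      calc |R0 x g| ≤ K * ‖x‖ * ‖g‖ := hR0bound x g
        _ = (K * ‖x‖) * ‖g‖ := by ring
    have hlip : LipschitzWith K Radd := by
      refine LipschitzWith.of_dist_le_mul (fun x x' => ?_)
      rw [dist_eq_norm, dist_eq_norm, ← map_sub Radd]
      exact hnorm (x - x')
    refine ⟨Radd.toRealLinearMap hlip.continuous, fun x₀ => ?_⟩
    ext g
    have h1 : (Radd.toRealLinearMap hlip.continuous) ↑x₀ = Radd ↑x₀ := by
      rw [AddMonoidHom.coe_toRealLinearMap]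
    rw [h1, hRadd_apply]
    exact hR0ext x₀ g
  · rintro ⟨R, hR⟩
    exact ⟨‖R‖₊, R, R.lipschitz, hR⟩
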